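/- arXiv:2103.15133 — 2 statements merged into one kernel-verified Lean document; each statement's English description precedes it below -/
import Mathlib

section
/- With h(V) = -s²V - p(V) - b as above, for V ∈ (v₋, v₊) the quantity f(V) := -p'(V) + (α+1)·h(V)/V is strictly positive, where α ≥ 0. -/
lemma aux_deriv_rpow (a γ : ℝ) (x : ℝ) (hx : x ≠ 0) :
    deriv (fun v : ℝ => a * v ^ (-γ)) x = a * (-γ * x ^ (-γ - 1)) := by
  have h := (Real.hasDerivAt_rpow_const (p := -γ) (Or.inl hx)).const_mul a
  exact h.deriv

lemma aux_strictConvex (a γ : ℝ) (ha : 0 < a) (hγ : 1 < γ) :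
    StrictConvexOn ℝ (Set.Ioi 0) (fun v : ℝ => a * v ^ (-γ)) := by
  apply strictConvexOn_of_deriv2_pos (convex_Ioi 0)
  · intro x hx
    exact (((Real.continuousAt_rpow_const x (-γ)
      (Or.inl (ne_of_gt hx))).const_smul a).continuousWithinAt).congr
      (fun y _ => by simp [smul_eq_mul]) (by simp [smul_eq_mul])
  · intro x hx
    rw [interior_Ioi] at hx
    have hx0 : (0:ℝ) < x := hx
    have heq : deriv (fun v : ℝ => a * v ^ (-γ)) =ᶠ[nhds x]
        (fun v : ℝ => a * (-γ) * v ^ (-γ - 1)) := by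
      filter_upwards [eventually_ne_nhds (ne_of_gt hx0)] with v hv
      rw [aux_deriv_rpow a γ v hv]; ring
    have h2 : deriv (deriv (fun v : ℝ => a * v ^ (-γ))) x
        = a * (-γ) * ((-γ - 1) * x ^ (-γ - 1 - 1)) := by
      rw [heq.deriv_eq]
      exact ((Real.hasDerivAt_rpow_const (p := -γ - 1)
        (Or.inl (ne_of_gt hx0))).const_mul (a * (-γ))).deriv
    have hpow : 0 < x ^ (-γ - 1 - 1) := Real.rpow_pos_of_pos hx0 _
    simp only [Function.iterate_succ, Function.iterate_zero, Function.comp_apply, id]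
    rw [h2]
    nlinarith [mul_pos (mul_pos (mul_pos ha (show (0:ℝ) < γ by linarith))
      (show (0:ℝ) < γ + 1 by linarith)) hpow]

/-- For `V ∈ (vminus, vplus)`, `f(V) = -p'(V) + (α+1) h(V)/V > 0`. -/
theorem stmt_4 (a γ α vminus vplus s : ℝ)
    (ha : 0 < a) (hγ : 1 < γ) (hα : 0 ≤ α)
    (hvm : 0 < vminus) (hvp : vminus < vplus) (hspos : 0 < s)
    (p p' : ℝ → ℝ) (hp : ∀ v, p v = a * v ^ (-γ))
    (hp' : ∀ v, p' v = -a * γ * v ^ (-γ - 1))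
    (hs2 : s ^ 2 = -(p vplus - p vminus) / (vplus - vminus))
    (b : ℝ) (hb : b = -s ^ 2 * vplus - p vplus)
    (h f : ℝ → ℝ) (hh : ∀ V, h V = -s ^ 2 * V - p V - b)
    (hf : ∀ V, f V = -p' V + (α + 1) * h V / V) :
    ∀ V, vminus < V → V < vplus → 0 < f V := by
  intro V hV1 hV2
  have hVpos : 0 < V := lt_trans hvm hV1
  have hd : 0 < vplus - vminus := by linarith
  set t₁ : ℝ := (vplus - V) / (vplus - vminus) with ht₁
  set t₂ : ℝ := (V - vminus) / (vplus - vminus) with ht₂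
  have ht₁pos : 0 < t₁ := div_pos (by linarith) hd
  have ht₂pos : 0 < t₂ := div_pos (by linarith) hd
  have hsum : t₁ + t₂ = 1 := by
    rw [ht₁, ht₂, ← add_div, div_eq_one_iff_eq (ne_of_gt hd)]; ring
  have hcomb : t₁ • vminus + t₂ • vplus = V := by
    rw [smul_eq_mul, smul_eq_mul, ht₁, ht₂, div_mul_eq_mul_div, div_mul_eq_mul_div,
      ← add_div, div_eq_iff (ne_of_gt hd)]; ring
  have hconv := aux_strictConvex a γ ha hγ
  have key := hconv.2 (Set.mem_Ioi.2 hvm) (Set.mem_Ioi.2 (lt_trans hvm hvp))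
    (ne_of_lt hvp) ht₁pos ht₂pos hsum
  rw [hcomb] at key
  simp only [smul_eq_mul] at key
  -- key : a * V ^ (-γ) < t₁ * (a * vminus ^ (-γ)) + t₂ * (a * vplus ^ (-γ))
  have hpV : p V = a * V ^ (-γ) := hp V
  have hpm : p vminus = a * vminus ^ (-γ) := hp vminus
  have hpp : p vplus = a * vplus ^ (-γ) := hp vplus
  have hhV : 0 < h V := by
    rw [hh V, hb, hs2]
    rw [hpV, hpm, hpp] at *
    have : -(-((a * vplus ^ (-γ)) - (a * vminus ^ (-γ))) / (vplus - vminus)) * V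
        - a * V ^ (-γ)
        - (-(-((a * vplus ^ (-γ)) - (a * vminus ^ (-γ))) / (vplus - vminus)) * vplus
          - a * vplus ^ (-γ))
        = (t₁ * (a * vminus ^ (-γ)) + t₂ * (a * vplus ^ (-γ))) - a * V ^ (-γ) := by
      simp only [ht₁, ht₂]; field_simp; ring
    rw [this]
    linarith
  have hp'V : p' V = -a * γ * V ^ (-γ - 1) := hp' V
  have hpowV : 0 < V ^ (-γ - 1) := Real.rpow_pos_of_pos hVpos _
  rw [hf V, hp'V]
  have h1 : 0 < -(-a * γ * V ^ (-γ - 1)) := by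
    nlinarith [mul_pos (mul_pos ha (show (0:ℝ) < γ by linarith)) hpowV]
  have h2 : 0 < (α + 1) * h V / V :=
    div_pos (mul_pos (by linarith) hhV) hVpos
  linarith
end

section
/- Let v₊ > 0, u₊ < 0, and p(v) = a v^{-γ} with a > 0, γ > 1. Then there exists a unique pair (v₋, s) with 0 < v₋ < v₊ and s > 0 satisfying the Rankine–Hugoniot conditions s(v₊ - v₋) = -u₊ and s u₊ = p(v₊) - p(v₋) (with u₋ = 0). -/
open Filter Topology Set

/-- Existence and uniqueness of the left state `(vminus, 0)` and shock speed `s > 0`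
from the Rankine–Hugoniot conditions. -/
theorem stmt_19 (a γ vplus uplus : ℝ)
    (ha : 0 < a) (hγ : 1 < γ) (hvp : 0 < vplus) (hup : uplus < 0)
    (p : ℝ → ℝ) (hp : ∀ v, p v = a * v ^ (-γ)) :
    ∃! q : ℝ × ℝ, (0 < q.1 ∧ q.1 < vplus ∧ 0 < q.2) ∧
      q.2 * (vplus - q.1) = -uplus ∧ q.2 * uplus = p vplus - p q.1 := by
  have hγ0 : 0 < γ := by linarith
  -- strict antitonicity of v ↦ a * v ^ (-γ) on positives
  have hanti : ∀ x y : ℝ, 0 < x → x < y → a * y ^ (-γ) < a * x ^ (-γ) := by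
    intro x y hx hxy
    have hy : 0 < y := hx.trans hxy
    rw [Real.rpow_neg hx.le, Real.rpow_neg hy.le]
    have h1 : x ^ γ < y ^ γ := Real.rpow_lt_rpow hx.le hxy hγ0
    have hxp : 0 < x ^ γ := Real.rpow_pos_of_pos hx γ
    exact mul_lt_mul_of_pos_left (by exact inv_strictAnti₀ hxp h1) ha
  set P : ℝ := a * vplus ^ (-γ) with hP
  set f : ℝ → ℝ := fun v => (a * v ^ (-γ) - P) * (vplus - v) with hf
  -- f tends to atTop as v → 0⁺
  have htop : Tendsto f (𝓝[>] (0:ℝ)) atTop := by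
    have h1 : Tendsto (fun v : ℝ => a * v ^ (-γ) - P) (𝓝[>] (0:ℝ)) atTop := by
      have h2 : Tendsto (fun v : ℝ => v ^ (-γ)) (𝓝[>] (0:ℝ)) atTop := by
        have h3 : Tendsto (fun v : ℝ => (v⁻¹) ^ γ) (𝓝[>] (0:ℝ)) atTop :=
          (tendsto_rpow_atTop hγ0).comp tendsto_inv_nhdsGT_zero
        refine h3.congr' ?_
        filter_upwards [self_mem_nhdsWithin] with v hv
        have hv' : (0:ℝ) < v := hv
        rw [Real.inv_rpow hv'.le, ← Real.rpow_neg hv'.le]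
      exact tendsto_atTop_add_const_right _ (-P)
        (Filter.Tendsto.const_mul_atTop ha h2)
    have h2 : Tendsto (fun v : ℝ => vplus - v) (𝓝[>] (0:ℝ)) (𝓝 vplus) := by
      have : Tendsto (fun v : ℝ => vplus - v) (𝓝 (0:ℝ)) (𝓝 (vplus - 0)) :=
        (tendsto_const_nhds.sub tendsto_id)
      simpa using this.mono_left nhdsWithin_le_nhds
    exact Filter.Tendsto.atTop_mul_pos hvp h1 h2
  -- pick ε with 0 < ε < vplus and f ε > uplus^2
  obtain ⟨ε, hεf, hε0, hεv⟩ :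
      ∃ ε : ℝ, uplus ^ 2 < f ε ∧ 0 < ε ∧ ε < vplus := by
    have h1 : ∀ᶠ v in 𝓝[>] (0:ℝ), uplus ^ 2 < f v := htop.eventually_gt_atTop _
    have h2 : ∀ᶠ v in 𝓝[>] (0:ℝ), v ∈ Set.Ioo (0:ℝ) vplus :=
      Ioo_mem_nhdsGT_of_mem ⟨le_refl 0, hvp⟩
    obtain ⟨v, hv1, hv2⟩ := (h1.and h2).exists
    exact ⟨v, hv1, hv2.1, hv2.2⟩
  -- continuity of f on [ε, vplus]
  have hcont : ContinuousOn f (Set.Icc ε vplus) := by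
    apply ContinuousOn.mul
    · apply ContinuousOn.sub _ continuousOn_const
      apply ContinuousOn.mul continuousOn_const
      apply ContinuousOn.rpow_const continuousOn_id
      intro x hx
      exact Or.inl (ne_of_gt (lt_of_lt_of_le hε0 hx.1))
    · exact (continuousOn_const.sub continuousOn_id)
  have hfvp : f vplus = 0 := by simp [hf]
  obtain ⟨v, hvmem, hfv⟩ : ∃ v ∈ Set.Icc ε vplus, f v = uplus ^ 2 := by
    have := intermediate_value_Icc' (le_of_lt hεv) hcont
    have hmem : uplus ^ 2 ∈ Set.Icc (f vplus) (f ε) := by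
      constructor
      · rw [hfvp]; positivity
      · exact le_of_lt hεf
    obtain ⟨v, hv, hfv⟩ := this hmem
    exact ⟨v, hv, hfv⟩
  have hv0 : 0 < v := lt_of_lt_of_le hε0 hvmem.1
  have hvlt : v < vplus := by
    rcases lt_or_eq_of_le hvmem.2 with h | h
    · exact h
    · exfalso
      rw [h, hfvp] at hfv
      have hne : uplus ≠ 0 := ne_of_lt hup
      have : uplus ^ 2 > 0 := by positivity
      linarith [hfv.symm]
  have hdpos : 0 < vplus - v := by linarith
  set s : ℝ := -uplus / (vplus - v) with hs
  have hspos : 0 < s := div_pos (by linarith) hdpos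
  have heq1 : s * (vplus - v) = -uplus := div_mul_cancel₀ _ (ne_of_gt hdpos)
  have hkey : (a * v ^ (-γ) - P) * (vplus - v) = uplus ^ 2 := hfv
  have heq2 : s * uplus = p vplus - p v := by
    rw [hp, hp, hs]
    rw [div_mul_eq_mul_div, div_eq_iff (ne_of_gt hdpos)]
    nlinarith [hkey]
  refine ⟨(v, s), ⟨⟨hv0, hvlt, hspos⟩, heq1, heq2⟩, ?_⟩
  rintro ⟨v', s'⟩ ⟨⟨hv0', hvlt', hs0'⟩, heq1', heq2'⟩
  simp only at heq1' heq2' hv0' hvlt' hs0' ⊢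
  have hd' : 0 < vplus - v' := by linarith
  -- derive f v' = uplus ^ 2
  have hkey' : (a * v' ^ (-γ) - P) * (vplus - v') = uplus ^ 2 := by
    rw [hp, hp] at heq2'
    nlinarith [heq1', heq2']
  -- strict monotonicity gives v' = v
  have hmono : ∀ x y : ℝ, 0 < x → x < y → y < vplus →
      (a * y ^ (-γ) - P) * (vplus - y) < (a * x ^ (-γ) - P) * (vplus - x) := by
    intro x y hx hxy hyv
    have h1 : a * y ^ (-γ) - P < a * x ^ (-γ) - P := by
      have := hanti x y hx hxy; linarith
    have h2 : 0 ≤ a * y ^ (-γ) - P := by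
      have := hanti y vplus (hx.trans hxy) hyv; linarith
    exact mul_lt_mul'' h1 (by linarith) h2 (by linarith)
  have hveq : v' = v := by
    rcases lt_trichotomy v' v with h | h | h
    · exfalso
      have := hmono v' v hv0' h hvlt
      rw [hkey, hkey'] at this; linarith
    · exact h
    · exfalso
      have := hmono v v' hv0 h hvlt'
      rw [hkey, hkey'] at this; linarith
  have hseq : s' = s := by
    subst hveq
    have : s' * (vplus - v') = s * (vplus - v') := by rw [heq1', heq1]
    exact mul_right_cancel₀ (ne_of_gt hd') this
  exact Prod.ext hveq hseq
end
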